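/- With notation as in the Whitney interpolation construction (families f_i satisfying axioms (1)-(5), a, b ∈ ℂ^N with a_i = a_j ⟹ b_i = b_j), the interpolation map ψ is continuous at each a_j: lim_{z → a_j} ψ(z) = b_j. -/

import Mathlib

set_option maxHeartbeats 1600000


/-- Continuity of the Whitney interpolation map at the interpolation points: with the
family `f₁,...,f_N` satisfying the Whitney interpolation axioms (1)-(5) and `a, b ∈ ℂ^N`
with `a_i = a_j ⟹ b_i = b_j`, the map `ψ(z) = z + (Σ μ_i(z)(b_i - a_i))/μ(z)` (for
`z ∉ {a₁,...,a_N}`), `ψ(a_i) = b_i`, satisfies `lim_{z → a_j} ψ(z) = b_j` for each `j`. -/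
theorem stmt14 {N d : ℕ} (hN : 0 < N) (hd : 0 < d) (C : ℝ) (hC : 1 < C)
    (f : Fin N → (Fin N → ℂ) → ℂ)
    (hcont : ∀ i, Continuous (f i))
    (hdiff : ∀ i (ξ : Fin N → ℂ), (∀ l, ξ l ≠ 0) → DifferentiableAt ℝ (f i) ξ)
    (hhom : ∀ i (ξ : Fin N → ℂ) (r : ℝ), 0 < r → f i (r • ξ) = (r : ℂ) ^ d * f i ξ)
    (hsym : ∀ i (ξ : Fin N → ℂ) (σ : Equiv.Perm (Fin N)), f i (ξ ∘ σ) = f (σ i) ξ)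
    (hbound : ∀ j (ξ : Fin N → ℂ), ‖f j ξ‖ ≤ C * ‖ξ j‖ * ‖ξ‖ ^ (d - 1))
    (hderbound : ∀ j k (ξ : Fin N → ℂ), (∀ l, ξ l ≠ 0) → ∀ v : ℂ,
      ‖ξ k‖ ^ 2 * ‖fderiv ℝ (f j) ξ (Pi.single k v)‖ ≤ C * ‖ξ j‖ * ‖ξ‖ ^ d * ‖v‖)
    (hreal : ∀ ξ : Fin N → ℂ, (∑ i, f i ξ).im = 0 ∧
      C⁻¹ * ‖ξ‖ ^ d ≤ (∑ i, f i ξ).re ∧ (∑ i, f i ξ).re ≤ C * ‖ξ‖ ^ d)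
    (a b : Fin N → ℂ) (hab : ∀ i j, a i = a j → b i = b j)
    (ψ : ℂ → ℂ)
    (hψ1 : ∀ z : ℂ, (∀ i, z ≠ a i) →
      ψ z = z + (∑ i, f i (fun k => (z - a k)⁻¹) * (b i - a i)) /
        (∑ i, f i (fun k => (z - a k)⁻¹)))
    (hψ2 : ∀ i, ψ (a i) = b i) :
    ∀ j : Fin N, Filter.Tendsto ψ (nhds (a j)) (nhds (b j)) := by

  classical
  intro j
  have hC0 : (0:ℝ) < C := lt_trans one_pos hC
  set E : Fin N → ℂ := fun i => (b i - a i) - (b j - a j) with hE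
  set g : Fin N → ℝ := fun i =>
    if a i = a j then 0 else C ^ 2 * (2 / ‖a j - a i‖) * ‖E i‖ with hg
  have hg0 : ∀ i, 0 ≤ g i := by
    intro i
    simp only [hg]
    split
    · exact le_refl 0
    · positivity
  set K : ℝ := 1 + ∑ i, g i with hK
  have hK0 : (0:ℝ) ≤ K := by
    have : (0:ℝ) ≤ ∑ i, g i := Finset.sum_nonneg fun i _ => hg0 i
    simp only [hK]; linarith
  rw [tendsto_iff_norm_sub_tendsto_zero]
  have hlim : Filter.Tendsto (fun z : ℂ => K * ‖z - a j‖) (nhds (a j)) (nhds 0) := by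
    have hcontg : Continuous fun z : ℂ => K * ‖z - a j‖ := by continuity
    have h := hcontg.tendsto (a j)
    simpa using h
  refine squeeze_zero' ?_ ?_ hlim
  · exact Filter.Eventually.of_forall fun z => norm_nonneg _
  have hev : ∀ᶠ z in nhds (a j), ∀ i, a i ≠ a j → ‖a j - a i‖ / 2 ≤ ‖z - a i‖ := by
    rw [Filter.eventually_all]
    intro i
    by_cases hij : a i = a j
    · exact Filter.Eventually.of_forall fun z h => absurd hij h
    · have hpos : 0 < ‖a j - a i‖ := by
        rw [norm_pos_iff, sub_ne_zero]
        exact fun h => hij h.symm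
      have htend : Filter.Tendsto (fun z : ℂ => ‖z - a i‖) (nhds (a j)) (nhds ‖a j - a i‖) :=
        ((continuous_id.sub continuous_const).norm).tendsto (a j)
      have hev' := htend.eventually (eventually_ge_nhds (by linarith : ‖a j - a i‖ / 2 < ‖a j - a i‖))
      filter_upwards [hev'] with z hz _
      exact hz
  filter_upwards [hev] with z hz
  by_cases hza : ∀ i, z ≠ a i
  case neg =>
    push_neg at hza
    obtain ⟨i, hi⟩ := hza
    have hij : a i = a j := by
      by_contra h
      have h1 := hz i h
      have hpos : 0 < ‖a j - a i‖ := by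
        rw [norm_pos_iff, sub_ne_zero]
        exact fun h' => h h'.symm
      rw [hi, sub_self, norm_zero] at h1
      linarith
    have hzaj : z = a j := hi.trans hij
    have : ψ z - b j = 0 := by
      rw [hi, hψ2 i, hab i j hij, sub_self]
    rw [this, norm_zero]
    positivity
  case pos =>
    set ξ : Fin N → ℂ := fun k => (z - a k)⁻¹ with hξdef
    have hξne : ∀ l, ξ l ≠ 0 := fun l => inv_ne_zero (sub_ne_zero.mpr (hza l))
    set μ : ℂ := ∑ i, f i ξ with hμ
    have hξj_pos : 0 < ‖ξ j‖ := norm_pos_iff.mpr (hξne j)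
    have hξ_pos : 0 < ‖ξ‖ := lt_of_lt_of_le hξj_pos (norm_le_pi_norm ξ j)
    have hμre : C⁻¹ * ‖ξ‖ ^ d ≤ μ.re := (hreal ξ).2.1
    have hμlow : C⁻¹ * ‖ξ‖ ^ d ≤ ‖μ‖ := by
      refine hμre.trans ?_
      exact Complex.re_le_norm μ
    have hden_pos : 0 < C⁻¹ * ‖ξ‖ ^ d := by positivity
    have hμnorm_pos : 0 < ‖μ‖ := lt_of_lt_of_le hden_pos hμlow
    have hμ0 : μ ≠ 0 := norm_pos_iff.mp hμnorm_pos
    have hξjnorm : ‖ξ j‖ = ‖z - a j‖⁻¹ := by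
      simp [hξdef]
    have hsum : ∑ i, f i ξ * E i = (∑ i, f i ξ * (b i - a i)) - μ * (b j - a j) := by
      rw [hμ, Finset.sum_mul, ← Finset.sum_sub_distrib]
      refine Finset.sum_congr rfl fun i _ => ?_
      simp only [hE]
      ring
    have key : ψ z - b j = (z - a j) + (∑ i, f i ξ * E i) / μ := by
      rw [hψ1 z hza, hsum, sub_div, mul_div_cancel_left₀ _ hμ0]
      ring
    have main : ‖(∑ i, f i ξ * E i) / μ‖ ≤ ∑ i, g i * ‖z - a j‖ := by
      rw [norm_div]
      calc ‖∑ i, f i ξ * E i‖ / ‖μ‖ ≤ (∑ i, ‖f i ξ * E i‖) / ‖μ‖ := by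
            gcongr
            exact norm_sum_le _ _
        _ = ∑ i, ‖f i ξ * E i‖ / ‖μ‖ := Finset.sum_div _ _ _
        _ ≤ ∑ i, g i * ‖z - a j‖ := by
            refine Finset.sum_le_sum fun i _ => ?_
            by_cases hij : a i = a j
            · have hEi : E i = 0 := by
                simp only [hE]
                rw [hab i j hij, hij]
                ring
              rw [hEi, mul_zero, norm_zero, zero_div]
              exact mul_nonneg (hg0 i) (norm_nonneg _)
            · have hδ : ‖a j - a i‖ / 2 ≤ ‖z - a i‖ := hz i hij
              have hδpos : 0 < ‖a j - a i‖ := by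
                rw [norm_pos_iff, sub_ne_zero]
                exact fun h' => hij h'.symm
              have hzi_pos : 0 < ‖z - a i‖ := norm_pos_iff.mpr (sub_ne_zero.mpr (hza i))
              have hξi : ‖ξ i‖ ≤ 2 / ‖a j - a i‖ := by
                have h2 : (2:ℝ) / ‖a j - a i‖ = (‖a j - a i‖ / 2)⁻¹ := by
                  rw [inv_div]
                rw [h2]
                have : ‖ξ i‖ = ‖z - a i‖⁻¹ := by simp [hξdef]
                rw [this]
                gcongr
              have hξinv : ‖ξ‖⁻¹ ≤ ‖z - a j‖ := by
                have h1 : ‖ξ j‖ ≤ ‖ξ‖ := norm_le_pi_norm ξ j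
                have h2 : ‖ξ‖⁻¹ ≤ ‖ξ j‖⁻¹ := by gcongr
                rwa [hξjnorm, inv_inv] at h2
              have hbnd := hbound i ξ
              have hd1 : ‖ξ‖ ^ d = ‖ξ‖ ^ (d - 1) * ‖ξ‖ := by
                conv_lhs => rw [← Nat.sub_add_cancel hd]
                rw [pow_succ]
              calc ‖f i ξ * E i‖ / ‖μ‖ = ‖f i ξ‖ * ‖E i‖ / ‖μ‖ := by rw [norm_mul]
                _ ≤ (C * ‖ξ i‖ * ‖ξ‖ ^ (d - 1) * ‖E i‖) / (C⁻¹ * ‖ξ‖ ^ d) := by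
                    gcongr
                _ = C ^ 2 * ‖ξ i‖ * ‖E i‖ * ‖ξ‖⁻¹ := by
                    rw [hd1]
                    field_simp
                    try ring
                _ ≤ C ^ 2 * (2 / ‖a j - a i‖) * ‖E i‖ * ‖z - a j‖ := by
                    gcongr
                _ = g i * ‖z - a j‖ := by
                    simp only [hg, if_neg hij]
    calc ‖ψ z - b j‖ ≤ ‖z - a j‖ + ‖(∑ i, f i ξ * E i) / μ‖ := by
          rw [key]; exact norm_add_le _ _
      _ ≤ ‖z - a j‖ + ∑ i, g i * ‖z - a j‖ := by linarith
      _ = K * ‖z - a j‖ := by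
          rw [hK, ← Finset.sum_mul]
          ring
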